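/- Let F : D → C be a Grothendieck opfibration and d ∈ D. Then the inclusion R : D(F(d))/d → D/d of the fiberwise slice category over d into the full slice category over d admits a left adjoint L, given by factoring any morphism d' → d as an opCartesian morphism followed by a fiberwise morphism. -/

import Mathlib

open CategoryTheory

universe v₁ u₁ v₂ u₂ v₃ u₃

section FibDefs

variable {E : Type u₁} [Category.{v₁} E] {C : Type u₂} [Category.{v₂} C]

/-- `α : x ⟶ y` is `p`-opCartesian. -/
def IsOpCart (p : E ⥤ C) {x y : E} (α : x ⟶ y) : Prop :=
  ∀ ⦃z : E⦄ (β : x ⟶ z) (h : p.obj z = p.obj y),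
    p.map β ≫ eqToHom h = p.map α →
      ∃! γ : y ⟶ z, α ≫ γ = β ∧ p.map γ = eqToHom h.symm

/-- `α : x ⟶ y` is `p`-Cartesian. -/
def IsCart (p : E ⥤ C) {x y : E} (α : x ⟶ y) : Prop :=
  ∀ ⦃z : E⦄ (β : z ⟶ y) (h : p.obj z = p.obj x),
    eqToHom h ≫ p.map α = p.map β →
      ∃! γ : z ⟶ x, γ ≫ α = β ∧ p.map γ = eqToHom h

/-- `p : E ⥤ C` is a Grothendieck opfibration. -/
structure IsOpFibration (p : E ⥤ C) : Prop where
  lift : ∀ ⦃a b : C⦄ (f : a ⟶ b) (x : E) (hx : p.obj x = a),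
    ∃ (y : E) (α : x ⟶ y) (hy : p.obj y = b),
      IsOpCart p α ∧ p.map α = eqToHom hx ≫ f ≫ eqToHom hy.symm
  comp : ∀ ⦃x y z : E⦄ (α : x ⟶ y) (β : y ⟶ z),
    IsOpCart p α → IsOpCart p β → IsOpCart p (α ≫ β)

/-- `p : E ⥤ C` is a Grothendieck fibration. -/
structure IsFibration (p : E ⥤ C) : Prop where
  lift : ∀ ⦃a b : C⦄ (f : a ⟶ b) (y : E) (hy : p.obj y = b),
    ∃ (x : E) (α : x ⟶ y) (hx : p.obj x = a),
      IsCart p α ∧ p.map α = eqToHom hx ≫ f ≫ eqToHom hy.symm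
  comp : ∀ ⦃x y z : E⦄ (α : x ⟶ y) (β : y ⟶ z),
    IsCart p α → IsCart p β → IsCart p (α ≫ β)

end FibDefs

section Stmt13

variable {D : Type u₁} [Category.{v₁} D] {C : Type u₂} [Category.{v₂} C]

/-- The fiberwise slice `D(F(d))/d ⊆ D/d`: the full subcategory of the slice category over
`d` consisting of morphisms `d' ⟶ d` which project to the identity of `F(d)`. -/
abbrev FiberSlice (F : D ⥤ C) (d : D) :=
  ObjectProperty.FullSubcategory (fun X : Over d => ∃ h : F.obj X.left = F.obj d, F.map X.hom = eqToHom h)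

namespace Stmt13Aux

variable {F : D ⥤ C} (hF : IsOpFibration F) {d : D}

/-- Data of an opCartesian lift over `F.map A.hom` starting at `A.left`. -/
structure LData (F : D ⥤ C) {d : D} (A : Over d) where
  y : D
  α : A.left ⟶ y
  hy : F.obj y = F.obj d
  cart : IsOpCart F α
  fac : F.map α = F.map A.hom ≫ eqToHom hy.symm

/-- Choose an opCartesian lift for each `A : Over d`. -/
noncomputable def ldata (A : Over d) : LData F A := by
  have h := hF.lift (F.map A.hom) A.left rfl
  exact ⟨h.choose, h.choose_spec.choose, h.choose_spec.choose_spec.choose,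
    h.choose_spec.choose_spec.choose_spec.1,
    by simpa using h.choose_spec.choose_spec.choose_spec.2⟩

/-- The unique filler given by opCartesianness. -/
noncomputable def fill {x y z : D} {α : x ⟶ y} (hα : IsOpCart F α) (β : x ⟶ z)
    (h : F.obj z = F.obj y) (hc : F.map β ≫ eqToHom h = F.map α) : y ⟶ z :=
  (hα β h hc).exists.choose

lemma fill_fac {x y z : D} {α : x ⟶ y} (hα : IsOpCart F α) (β : x ⟶ z)
    (h : F.obj z = F.obj y) (hc : F.map β ≫ eqToHom h = F.map α) :
    α ≫ fill hα β h hc = β :=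
  (hα β h hc).exists.choose_spec.1

lemma fill_vert {x y z : D} {α : x ⟶ y} (hα : IsOpCart F α) (β : x ⟶ z)
    (h : F.obj z = F.obj y) (hc : F.map β ≫ eqToHom h = F.map α) :
    F.map (fill hα β h hc) = eqToHom h.symm :=
  (hα β h hc).exists.choose_spec.2

lemma fill_unique {x y z : D} {α : x ⟶ y} (hα : IsOpCart F α) (β : x ⟶ z)
    (h : F.obj z = F.obj y) (hc : F.map β ≫ eqToHom h = F.map α)
    {γ₁ γ₂ : y ⟶ z} (e1 : α ≫ γ₁ = β) (v1 : F.map γ₁ = eqToHom h.symm)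
    (e2 : α ≫ γ₂ = β) (v2 : F.map γ₂ = eqToHom h.symm) : γ₁ = γ₂ :=
  (hα β h hc).unique ⟨e1, v1⟩ ⟨e2, v2⟩

/-- The vertical part of the factorisation of `A.hom`. -/
noncomputable def gamma (A : Over d) : (ldata hF A).y ⟶ d :=
  fill (ldata hF A).cart A.hom (ldata hF A).hy.symm (ldata hF A).fac.symm

lemma gamma_fac (A : Over d) : (ldata hF A).α ≫ gamma hF A = A.hom :=
  fill_fac _ _ _ _

lemma gamma_vert (A : Over d) : F.map (gamma hF A) = eqToHom (ldata hF A).hy :=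
  fill_vert _ _ _ _

/-- Object part of the left adjoint. -/
@[reducible]
noncomputable def Lobj (A : Over d) : FiberSlice F d :=
  ⟨Over.mk (gamma hF A), ⟨(ldata hF A).hy, by simpa using gamma_vert hF A⟩⟩

/-- A morphism between fiberwise-slice objects is automatically vertical. -/
lemma vert_of_hom {X Y : FiberSlice F d} (g : X ⟶ Y) :
    F.map (g.hom : X.obj ⟶ Y.obj).left = eqToHom (X.2.choose.trans Y.2.choose.symm) := by
  have hw : (g.hom : X.obj ⟶ Y.obj).left ≫ Y.obj.hom = X.obj.hom := Over.w g.hom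
  have h1 : F.map (g.hom : X.obj ⟶ Y.obj).left ≫ F.map Y.obj.hom = F.map X.obj.hom := by
    rw [← F.map_comp, hw]
  rw [X.2.choose_spec, Y.2.choose_spec] at h1
  calc F.map (g.hom : X.obj ⟶ Y.obj).left
      = (F.map (g.hom : X.obj ⟶ Y.obj).left ≫ eqToHom Y.2.choose) ≫
          eqToHom Y.2.choose.symm := by simp
    _ = eqToHom X.2.choose ≫ eqToHom Y.2.choose.symm := by rw [h1]
    _ = _ := by simp

/-- Extensionality: two morphisms out of `Lobj A` agreeing after composition with the
opCartesian map `α` are equal. -/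
lemma hom_ext_L {A : Over d} {X : FiberSlice F d} (g₁ g₂ : Lobj hF A ⟶ X)
    (h : (ldata hF A).α ≫ (g₁.hom : (Lobj hF A).obj ⟶ X.obj).left
       = (ldata hF A).α ≫ (g₂.hom : (Lobj hF A).obj ⟶ X.obj).left) : g₁ = g₂ := by
  apply ObjectProperty.hom_ext
  apply Over.OverMorphism.ext
  have hc : F.map ((ldata hF A).α ≫ (g₁.hom : (Lobj hF A).obj ⟶ X.obj).left) ≫
      eqToHom (X.2.choose.trans (ldata hF A).hy.symm) = F.map (ldata hF A).α := by
    rw [F.map_comp, Category.assoc, vert_of_hom g₁]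
    simp [eqToHom_trans]
  refine fill_unique (ldata hF A).cart _ (X.2.choose.trans (ldata hF A).hy.symm) hc
    rfl ?_ h.symm ?_
  · rw [vert_of_hom g₁]
  · rw [vert_of_hom g₂]

lemma map_cond {A B : Over d} (u : A ⟶ B) :
    F.map (u.left ≫ (ldata hF B).α) ≫
        eqToHom ((ldata hF B).hy.trans (ldata hF A).hy.symm) = F.map (ldata hF A).α := by
  have hwu : u.left ≫ B.hom = A.hom := Over.w u
  calc F.map (u.left ≫ (ldata hF B).α) ≫
        eqToHom ((ldata hF B).hy.trans (ldata hF A).hy.symm)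
      = F.map u.left ≫ F.map (ldata hF B).α ≫
        eqToHom ((ldata hF B).hy.trans (ldata hF A).hy.symm) := by
        rw [F.map_comp, Category.assoc]
    _ = F.map u.left ≫ F.map B.hom ≫ eqToHom (ldata hF A).hy.symm := by
        rw [(ldata hF B).fac]
        simp [eqToHom_trans]
    _ = F.map (u.left ≫ B.hom) ≫ eqToHom (ldata hF A).hy.symm := by
        rw [F.map_comp, Category.assoc]
    _ = F.map A.hom ≫ eqToHom (ldata hF A).hy.symm := by rw [hwu]
    _ = F.map (ldata hF A).α := (ldata hF A).fac.symm

/-- Morphism part of the left adjoint. -/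
noncomputable def Lmap {A B : Over d} (u : A ⟶ B) : Lobj hF A ⟶ Lobj hF B :=
  ObjectProperty.homMk <| Over.homMk
    (fill (ldata hF A).cart (u.left ≫ (ldata hF B).α)
      ((ldata hF B).hy.trans (ldata hF A).hy.symm) (map_cond hF u))
    (by
      show fill _ _ _ _ ≫ gamma hF B = gamma hF A
      apply fill_unique (ldata hF A).cart A.hom (ldata hF A).hy.symm (ldata hF A).fac.symm
      · rw [← Category.assoc, fill_fac, Category.assoc, gamma_fac]
        exact Over.w u
      · rw [F.map_comp, fill_vert, gamma_vert]
        simp [eqToHom_trans]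
      · exact gamma_fac hF A
      · exact gamma_vert hF A)

lemma Lmap_fac {A B : Over d} (u : A ⟶ B) :
    (ldata hF A).α ≫ ((Lmap hF u).hom : (Lobj hF A).obj ⟶ (Lobj hF B).obj).left
      = u.left ≫ (ldata hF B).α :=
  fill_fac (ldata hF A).cart (u.left ≫ (ldata hF B).α)
    ((ldata hF B).hy.trans (ldata hF A).hy.symm) (map_cond hF u)

/-- The left adjoint. -/
noncomputable def L : Over d ⥤ FiberSlice F d where
  obj := Lobj hF
  map := Lmap hF
  map_id A := by
    apply hom_ext_L hF
    rw [Lmap_fac hF (𝟙 A)]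
    show 𝟙 A.left ≫ (ldata hF A).α = (ldata hF A).α ≫ 𝟙 (ldata hF A).y
    simp
  map_comp {A B E} u v := by
    apply hom_ext_L hF
    rw [Lmap_fac hF (u ≫ v)]
    show (u ≫ v).left ≫ (ldata hF E).α = (ldata hF A).α ≫
      (((Lmap hF u).hom : (Lobj hF A).obj ⟶ (Lobj hF B).obj).left ≫
       ((Lmap hF v).hom : (Lobj hF B).obj ⟶ (Lobj hF E).obj).left)
    rw [← Category.assoc, Lmap_fac, Category.assoc, Lmap_fac, ← Category.assoc]
    rfl

lemma equiv_cond (A : Over d) (X : FiberSlice F d) (f : A ⟶ X.obj) :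
    F.map f.left ≫ eqToHom (X.2.choose.trans (ldata hF A).hy.symm) =
      F.map (ldata hF A).α := by
  have hw : f.left ≫ X.obj.hom = A.hom := Over.w f
  calc F.map f.left ≫ eqToHom (X.2.choose.trans (ldata hF A).hy.symm)
      = F.map f.left ≫ eqToHom X.2.choose ≫ eqToHom (ldata hF A).hy.symm := by
        simp [eqToHom_trans]
    _ = F.map f.left ≫ F.map X.obj.hom ≫ eqToHom (ldata hF A).hy.symm := by
        rw [← X.2.choose_spec]
    _ = F.map (f.left ≫ X.obj.hom) ≫ eqToHom (ldata hF A).hy.symm := by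
        rw [F.map_comp, Category.assoc]
    _ = F.map A.hom ≫ eqToHom (ldata hF A).hy.symm := by rw [hw]
    _ = F.map (ldata hF A).α := (ldata hF A).fac.symm

/-- The hom-set equivalence of the adjunction. -/
noncomputable def homEquiv (A : Over d) (X : FiberSlice F d) :
    (Lobj hF A ⟶ X) ≃ (A ⟶ X.obj) where
  toFun g := Over.homMk ((ldata hF A).α ≫ (g.hom : (Lobj hF A).obj ⟶ X.obj).left)
    (by rw [Category.assoc, Over.w (g.hom : (Lobj hF A).obj ⟶ X.obj)]
        exact gamma_fac hF A)
  invFun f := ObjectProperty.homMk <| Over.homMk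
      (fill (ldata hF A).cart f.left (X.2.choose.trans (ldata hF A).hy.symm)
        (equiv_cond hF A X f))
      (by
        show fill _ _ _ _ ≫ X.obj.hom = gamma hF A
        apply fill_unique (ldata hF A).cart A.hom (ldata hF A).hy.symm (ldata hF A).fac.symm
        · rw [← Category.assoc, fill_fac]
          exact Over.w f
        · rw [F.map_comp, fill_vert]
          calc eqToHom (X.2.choose.trans (ldata hF A).hy.symm).symm ≫ F.map X.obj.hom
              = eqToHom (X.2.choose.trans (ldata hF A).hy.symm).symm ≫
                  eqToHom X.2.choose :=
                congrArg (fun t => eqToHom (X.2.choose.trans (ldata hF A).hy.symm).symm ≫ t)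
                  X.2.choose_spec
            _ = _ := by simp [eqToHom_trans]
        · exact gamma_fac hF A
        · exact gamma_vert hF A)
  left_inv g := by
    apply hom_ext_L hF
    simp only [ObjectProperty.homMk_hom, Over.homMk_left, fill_fac]
  right_inv f := by
    apply Over.OverMorphism.ext
    simp only [ObjectProperty.homMk_hom, Over.homMk_left, fill_fac]

lemma homEquiv_symm_fac (A : Over d) (X : FiberSlice F d) (f : A ⟶ X.obj) :
    (ldata hF A).α ≫ (((homEquiv hF A X).symm f).hom : (Lobj hF A).obj ⟶ X.obj).left = f.left := by
  simp only [homEquiv, Equiv.coe_fn_symm_mk, ObjectProperty.homMk_hom, Over.homMk_left, fill_fac]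

/-- The adjunction. -/
noncomputable def adj : L hF ⊣ ObjectProperty.ι
    (fun X : Over d => ∃ h : F.obj X.left = F.obj d, F.map X.hom = eqToHom h) :=
  Adjunction.mkOfHomEquiv
    { homEquiv := fun A X => homEquiv hF A X
      homEquiv_naturality_left_symm := by
        intro A' A X f g
        apply hom_ext_L hF
        have e1 := homEquiv_symm_fac hF A' X (f ≫ g)
        have e2 := homEquiv_symm_fac hF A X g
        calc (ldata hF A').α ≫
              ((((homEquiv hF A' X).symm (f ≫ g)).hom : (Lobj hF A').obj ⟶ X.obj)).left
            = (f ≫ g).left := e1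
          _ = f.left ≫ g.left := rfl
          _ = f.left ≫ (ldata hF A).α ≫
                ((((homEquiv hF A X).symm g).hom : (Lobj hF A).obj ⟶ X.obj)).left := by rw [e2]
          _ = ((ldata hF A').α ≫
                ((Lmap hF f).hom : (Lobj hF A').obj ⟶ (Lobj hF A).obj).left) ≫
                ((((homEquiv hF A X).symm g).hom : (Lobj hF A).obj ⟶ X.obj)).left := by
              rw [Lmap_fac, Category.assoc]
          _ = (ldata hF A').α ≫
                (((Lmap hF f ≫ (homEquiv hF A X).symm g).hom :
                  (Lobj hF A').obj ⟶ X.obj)).left := by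
              rw [Category.assoc]
              rfl
      homEquiv_naturality_right := by
        intro A X X' g k
        apply Over.OverMorphism.ext
        show (ldata hF A).α ≫ (((g ≫ k).hom : (Lobj hF A).obj ⟶ X'.obj)).left
          = ((ldata hF A).α ≫ (g.hom : (Lobj hF A).obj ⟶ X.obj).left) ≫
              (k.hom : X.obj ⟶ X'.obj).left
        erw [Category.assoc]
        rfl }

lemma adj_unit_left (A : Over d) :
    (((adj hF).unit.app A : A ⟶ (Lobj hF A).obj)).left = (ldata hF A).α := by
  show (ldata hF A).α ≫ (𝟙 (Lobj hF A).obj : _ ⟶ _).left = (ldata hF A).α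
  simp

end Stmt13Aux

/-- For a Grothendieck opfibration `F : D ⥤ C` and `d ∈ D`, the inclusion
`R : D(F(d))/d ⥤ D/d` of the fiberwise slice into the full slice admits a left adjoint,
given by factoring a morphism `d' ⟶ d` as an opCartesian morphism followed by a fiberwise
one (so that the unit of the adjunction is opCartesian). -/
theorem stmt_13 (F : D ⥤ C) (hF : IsOpFibration F) (d : D) :
    ∃ (L : Over d ⥤ FiberSlice F d)
      (adj : L ⊣ ObjectProperty.ι
        (fun X : Over d => ∃ h : F.obj X.left = F.obj d, F.map X.hom = eqToHom h)),
      ∀ A : Over d, IsOpCart F ((adj.unit.app A).left) := by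
  refine ⟨Stmt13Aux.L hF, Stmt13Aux.adj hF, fun A => ?_⟩
  rw [Stmt13Aux.adj_unit_left hF A]
  exact (Stmt13Aux.ldata hF A).cart

end Stmt13
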